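/- Let S ⊆ {1,…,N} and δ ≥ 0, and suppose (1 − δ)‖x‖₂² ≤ ‖Φx‖₂² ≤ (1 + δ)‖x‖₂² for all x ∈ ℝ^N supported on S. Then for any vectors u, a ∈ ℝ^N both supported on S, |uᵀ((ΦᵀΦ − I)a)| ≤ δ·‖u‖₂·‖a‖₂. -/

import Mathlib

open Matrix

/-- if `Φ` satisfies the restricted-isometry-type bound with
constant `δ` on vectors supported on `S`, then for `u, a` supported on `S`,
`|uᵀ(ΦᵀΦ − I)a| ≤ δ ‖u‖₂ ‖a‖₂`. -/
theorem stmt14 {M N : ℕ} (hM : 0 < M) (hN : 0 < N)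
    (Φ : Matrix (Fin M) (Fin N) ℝ) (S : Set (Fin N)) (δ : ℝ) (hδ : 0 ≤ δ)
    (hRIP : ∀ x : Fin N → ℝ, (∀ n : Fin N, n ∉ S → x n = 0) →
      (1 - δ) * ∑ n, x n ^ 2 ≤ ∑ m, ((Φ *ᵥ x) m) ^ 2 ∧
        ∑ m, ((Φ *ᵥ x) m) ^ 2 ≤ (1 + δ) * ∑ n, x n ^ 2)
    (u a : Fin N → ℝ)
    (hu : ∀ n : Fin N, n ∉ S → u n = 0)
    (ha : ∀ n : Fin N, n ∉ S → a n = 0) :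
    |u ⬝ᵥ ((Φᵀ * Φ - 1) *ᵥ a)| ≤
      δ * Real.sqrt (∑ n, u n ^ 2) * Real.sqrt (∑ n, a n ^ 2) := by
  classical
  set f : (Fin N → ℝ) → (Fin M → ℝ) := Φ.mulVec with hf
  -- quadratic bound
  have hQ : ∀ x : Fin N → ℝ, (∀ n, n ∉ S → x n = 0) →
      |f x ⬝ᵥ f x - x ⬝ᵥ x| ≤ δ * (x ⬝ᵥ x) := by
    intro x hx
    obtain ⟨h1, h2⟩ := hRIP x hx
    have e1 : f x ⬝ᵥ f x = ∑ m, ((Φ *ᵥ x) m) ^ 2 := by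
      simp [hf, dotProduct, sq]
    have e2 : x ⬝ᵥ x = ∑ n, x n ^ 2 := by
      simp [dotProduct, sq]
    rw [e1, e2, abs_le]
    constructor <;> nlinarith
  -- rewrite the target bilinear form
  have hL : u ⬝ᵥ ((Φᵀ * Φ - 1) *ᵥ a) = f u ⬝ᵥ f a - u ⬝ᵥ a := by
    rw [Matrix.sub_mulVec, dotProduct_sub, Matrix.one_mulVec,
      ← Matrix.mulVec_mulVec, Matrix.dotProduct_mulVec, Matrix.vecMul_transpose]
  set α := Real.sqrt (∑ n, u n ^ 2) with hα
  set β := Real.sqrt (∑ n, a n ^ 2) with hβ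
  have hsu : (0:ℝ) ≤ ∑ n, u n ^ 2 := Finset.sum_nonneg fun i _ => sq_nonneg _
  have hsa : (0:ℝ) ≤ ∑ n, a n ^ 2 := Finset.sum_nonneg fun i _ => sq_nonneg _
  have hα2 : α ^ 2 = ∑ n, u n ^ 2 := Real.sq_sqrt hsu
  have hβ2 : β ^ 2 = ∑ n, a n ^ 2 := Real.sq_sqrt hsa
  have hα0 : 0 ≤ α := Real.sqrt_nonneg _
  have hβ0 : 0 ≤ β := Real.sqrt_nonneg _
  have euu : u ⬝ᵥ u = α ^ 2 := by rw [hα2]; simp [dotProduct, sq]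
  have eaa : a ⬝ᵥ a = β ^ 2 := by rw [hβ2]; simp [dotProduct, sq]
  -- handle degenerate cases
  rcases eq_or_lt_of_le hα0 with hαz | hαpos
  · have hu0 : u = 0 := by
      funext n
      have : ∑ n, u n ^ 2 = 0 := by rw [← hα2, ← hαz]; ring
      have := (Finset.sum_eq_zero_iff_of_nonneg (fun i _ => sq_nonneg (u i))).mp this n (Finset.mem_univ n)
      simpa [pow_eq_zero_iff] using this
    simp [hu0]
    positivity
  rcases eq_or_lt_of_le hβ0 with hβz | hβpos
  · have ha0 : a = 0 := by
      funext n
      have : ∑ n, a n ^ 2 = 0 := by rw [← hβ2, ← hβz]; ring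
      have := (Finset.sum_eq_zero_iff_of_nonneg (fun i _ => sq_nonneg (a i))).mp this n (Finset.mem_univ n)
      simpa [pow_eq_zero_iff] using this
    simp [ha0]
    positivity
  -- scaled vectors
  set x := β • u with hx
  set y := α • a with hy
  have hxS : ∀ n, n ∉ S → x n = 0 := fun n hn => by simp [hx, hu n hn]
  have hyS : ∀ n, n ∉ S → y n = 0 := fun n hn => by simp [hy, ha n hn]
  have hxyS : ∀ n, n ∉ S → (x + y) n = 0 := fun n hn => by
    simp [hxS n hn, hyS n hn]
  have hxyS' : ∀ n, n ∉ S → (x - y) n = 0 := fun n hn => by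
    simp [hxS n hn, hyS n hn]
  have hfadd : f (x + y) = f x + f y := Matrix.mulVec_add Φ x y
  have hfsub : f (x - y) = f x - f y := Matrix.mulVec_sub Φ x y
  have hcomm : f x ⬝ᵥ f y = f y ⬝ᵥ f x := dotProduct_comm _ _
  have hcomm' : x ⬝ᵥ y = y ⬝ᵥ x := dotProduct_comm _ _
  -- polarization identity
  have hpol : f x ⬝ᵥ f y - x ⬝ᵥ y =
      ((f (x+y) ⬝ᵥ f (x+y) - (x+y) ⬝ᵥ (x+y)) -
       (f (x-y) ⬝ᵥ f (x-y) - (x-y) ⬝ᵥ (x-y))) / 4 := by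
    rw [hfadd, hfsub]
    simp only [add_dotProduct, dotProduct_add,
      sub_dotProduct, dotProduct_sub]
    rw [hcomm, hcomm']
    ring
  have hQp := hQ (x + y) hxyS
  have hQm := hQ (x - y) hxyS'
  -- parallelogram
  have hpar : (x+y) ⬝ᵥ (x+y) + (x-y) ⬝ᵥ (x-y) = 2 * (x ⬝ᵥ x) + 2 * (y ⬝ᵥ y) := by
    simp only [add_dotProduct, dotProduct_add,
      sub_dotProduct, dotProduct_sub]
    rw [hcomm']
    ring
  have hxx : x ⬝ᵥ x = β ^ 2 * α ^ 2 := by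
    simp [hx, smul_dotProduct, dotProduct_smul, euu, smul_eq_mul]
    ring
  have hyy : y ⬝ᵥ y = α ^ 2 * β ^ 2 := by
    simp [hy, smul_dotProduct, dotProduct_smul, eaa, smul_eq_mul]
    ring
  -- bound the scaled bilinear form
  have hbound : |f x ⬝ᵥ f y - x ⬝ᵥ y| ≤ δ * (α ^ 2 * β ^ 2) := by
    rw [hpol, abs_le]
    rw [abs_le] at hQp hQm
    have hkey : δ * ((x+y) ⬝ᵥ (x+y)) + δ * ((x-y) ⬝ᵥ (x-y))
        = 4 * (δ * (α ^ 2 * β ^ 2)) := by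
      calc δ * ((x+y) ⬝ᵥ (x+y)) + δ * ((x-y) ⬝ᵥ (x-y))
          = δ * ((x+y) ⬝ᵥ (x+y) + (x-y) ⬝ᵥ (x-y)) := by ring
        _ = δ * (2 * (β ^ 2 * α ^ 2) + 2 * (α ^ 2 * β ^ 2)) := by rw [hpar, hxx, hyy]
        _ = 4 * (δ * (α ^ 2 * β ^ 2)) := by ring
    constructor <;> linarith [hQp.1, hQp.2, hQm.1, hQm.2]
  -- relate scaled form to original
  have hscale : f x ⬝ᵥ f y - x ⬝ᵥ y = (β * α) * (f u ⬝ᵥ f a - u ⬝ᵥ a) := by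
    have e1 : f x = β • f u := Matrix.mulVec_smul Φ β u
    have e2 : f y = α • f a := Matrix.mulVec_smul Φ α a
    rw [e1, e2, hx, hy]
    simp [smul_dotProduct, dotProduct_smul, smul_eq_mul]
    ring
  rw [hL]
  have hαβ : 0 < β * α := mul_pos hβpos hαpos
  have := hbound
  rw [hscale, abs_mul, abs_of_pos hαβ] at this
  have hfin : |f u ⬝ᵥ f a - u ⬝ᵥ a| ≤ δ * α * β := by
    rw [← mul_le_mul_iff_right₀ hαβ]
    calc β * α * |f u ⬝ᵥ f a - u ⬝ᵥ a| ≤ δ * (α ^ 2 * β ^ 2) := this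
    _ = β * α * (δ * α * β) := by ring
  exact hfin
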